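/- Let S be an alphabet with a complementation s ↦ s' (an involution without fixed points). Let v ∈ S^d be a word, W ⊆ S^d a set of pairwise dichotomous words (a genome), and define g(v,w) = Π_{i=1}^d (2·[v_i = w_i] + [v_i ∉ {w_i, w_i'}]). Then Σ_{w∈W} g(v,w) ≤ 2^d. -/

import Mathlib

open Finset

/-- For a fixed-point-free involution `c`, there is a Boolean "orientation"
distinguishing each element from its complement. -/
private lemma exists_orientation {S : Type*} [DecidableEq S] (c : S → S)
    (hinv : ∀ s, c (c s) = s) (hfix : ∀ s, c s ≠ s) :
    ∃ r : S → Bool, ∀ s, r (c s) ≠ r s := by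
  classical
  let st : Setoid S :=
    { r := fun s t => t = s ∨ t = c s
      iseqv := by
        refine ⟨fun s => Or.inl rfl, ?_, ?_⟩
        · intro s t h
          rcases h with h | h
          · exact Or.inl h.symm
          · right; rw [h, hinv]
        · intro s t u h1 h2
          rcases h1 with h1 | h1 <;> rcases h2 with h2 | h2 <;> subst h1 <;> subst h2
          · exact Or.inl rfl
          · exact Or.inr rfl
          · exact Or.inr rfl
          · left; rw [hinv] }
  refine ⟨fun s => decide ((Quotient.mk st s).out = s), ?_⟩
  intro s
  have hclass : (Quotient.mk st (c s)) = Quotient.mk st s :=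
    Quotient.sound (Or.inr (hinv s).symm)
  set o : S := (Quotient.mk st s).out with ho
  have hos : st.r o s := Quotient.exact ((Quotient.mk st s).out_eq)
  simp only [hclass, ← ho]
  rcases hos with h | h
  · -- s = o
    have h1 : o = s := h.symm
    have h2 : o ≠ c s := by
      intro hc; exact hfix s (h1.symm.trans hc).symm
    simp [h1, h2]
    exact fun hc => hfix s hc.symm
  · -- s = c o
    have h1 : o = c s := by rw [h, hinv]
    have h2 : o ≠ s := by
      intro hc; exact hfix s (h1.symm.trans hc)
    simp [h1, h2, hfix s]

/-- for an alphabet with a fixed-point-free involutive complementation,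
a word `v` and a genome `W` (a finite set of pairwise dichotomous words),
`∑_{w ∈ W} g(v,w) ≤ 2^d`, where `g(v,w) = ∏ᵢ (2·[vᵢ = wᵢ] + [vᵢ ∉ {wᵢ, wᵢ'}])`. -/
theorem stmt_18 (S : Type*) [DecidableEq S] (c : S → S)
    (hinv : ∀ s, c (c s) = s) (hfix : ∀ s, c s ≠ s)
    {d : ℕ} (v : Fin d → S) (W : Finset (Fin d → S))
    (hW : ∀ u ∈ W, ∀ w ∈ W, u ≠ w → ∃ i, u i = c (w i)) :
    (∑ w ∈ W, ∏ i,
        (2 * (if v i = w i then 1 else 0)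
          + (if v i ≠ w i ∧ v i ≠ c (w i) then 1 else 0))) ≤ 2 ^ d := by
  classical
  obtain ⟨r, hr⟩ := exists_orientation c hinv hfix
  set E : (Fin d → S) → Finset (Fin d) :=
    fun w => univ.filter (fun i => v i = w i) with hE
  set W' : Finset (Fin d → S) := W.filter (fun w => ∀ i, v i ≠ c (w i)) with hW'
  -- bad words contribute 0
  have hzero : ∀ w ∈ W,
      (∏ i, (2 * (if v i = w i then 1 else 0)
          + (if v i ≠ w i ∧ v i ≠ c (w i) then 1 else 0))) ≠ 0 →
      (∀ i, v i ≠ c (w i)) := by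
    intro w _ hne
    by_contra hbad
    push_neg at hbad
    obtain ⟨i, hi⟩ := hbad
    apply hne
    apply Finset.prod_eq_zero (Finset.mem_univ i)
    have h1 : v i ≠ w i := fun h => hfix (w i) (hi.symm.trans h)
    simp [h1, hi, hfix (w i)]
  have hstep1 : (∑ w ∈ W, ∏ i,
        (2 * (if v i = w i then 1 else 0)
          + (if v i ≠ w i ∧ v i ≠ c (w i) then 1 else 0)))
      = ∑ w ∈ W', ∏ i,
        (2 * (if v i = w i then 1 else 0)
          + (if v i ≠ w i ∧ v i ≠ c (w i) then 1 else 0)) :=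
    (Finset.sum_filter_of_ne hzero).symm
  have hstep2 : ∀ w ∈ W',
      (∏ i, (2 * (if v i = w i then 1 else 0)
          + (if v i ≠ w i ∧ v i ≠ c (w i) then 1 else 0)))
      = 2 ^ (E w).card := by
    intro w hw
    rw [hW', Finset.mem_filter] at hw
    have hgood := hw.2
    have : (∏ i, (2 * (if v i = w i then 1 else 0)
          + (if v i ≠ w i ∧ v i ≠ c (w i) then 1 else 0)))
        = ∏ i, (if v i = w i then 2 else 1) := by
      apply Finset.prod_congr rfl
      intro i _
      by_cases h : v i = w i
      · simp [h]
      · simp [h, hgood i]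
    rw [this, Finset.prod_ite, Finset.prod_const, Finset.prod_const, one_pow, mul_one, hE]
  have hstep3 : (∑ w ∈ W', (2:ℕ) ^ (E w).card)
      = (W'.sigma fun w => (E w).powerset).card := by
    rw [Finset.card_sigma]
    exact Finset.sum_congr rfl fun w _ => by rw [Finset.card_powerset]
  rw [hstep1, Finset.sum_congr rfl hstep2, hstep3]
  have hcard : (Finset.univ : Finset (Fin d → Bool)).card = 2 ^ d := by
    simp [Finset.card_univ]
  rw [← hcard]
  apply Finset.card_le_card_of_injOn
    (fun p => fun i => if v i = p.1 i then decide (i ∈ p.2) else r (p.1 i))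
  · intro _ _; exact Finset.mem_univ _
  · rintro ⟨w, A⟩ hwA ⟨u, B⟩ huB hφ
    simp only [Finset.coe_sigma, Set.mem_sigma_iff, Finset.mem_coe,
      Finset.mem_powerset] at hwA huB
    obtain ⟨hwW', hA⟩ := hwA
    obtain ⟨huW', hB⟩ := huB
    rw [hW', Finset.mem_filter] at hwW' huW'
    by_cases hwu : w = u
    · subst hwu
      have hAB : A = B := by
        ext i
        by_cases h : v i = w i
        · have := congrFun hφ i
          simp only [h, if_pos] at this
          simpa using this
        · constructor
          · intro hiA
            exact absurd (by simpa [hE] using hA hiA) h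
          · intro hiB
            exact absurd (by simpa [hE] using hB hiB) h
      rw [hAB]
    · obtain ⟨i, hi⟩ := hW w hwW'.1 u huW'.1 hwu
      -- hi : w i = c (u i)
      exfalso
      have h1 : v i ≠ w i := fun h => huW'.2 i (h.trans hi)
      have h2 : v i ≠ u i := fun h => hwW'.2 i (by rw [h, hi, hinv])
      have := congrFun hφ i
      simp only [h1, h2, if_neg, if_false] at this
      exact hr (u i) (by rw [← hi]; exact this)
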